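/- Let p be a prime, ℓ ≥ 2 an integer, and k ≥ 1 an integer. Let m_δ ∈ ℤ[X] be an irreducible polynomial dividing the quantum number [ℓ] such that m_δ does not divide [n] for any 1 ≤ n < ℓ. Then there exists a polynomial F ∈ ℤ[X] such that [ℓ·p^k] = [ℓ·p^{k−1}] · ([p]^{p^{k−1}} · [ℓ]^{(p−1)·p^{k−1}} + p·F), and F is divisible neither by the constant polynomial p nor by m_δ in ℤ[X]. -/

import Mathlib

set_option linter.unusedSectionVars false
set_option maxHeartbeats 1000000

open Polynomial

/-- The quantum number polynomials `[n] ∈ ℤ[δ]`, defined by `[0] = 0`, `[1] = 1`,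
`[n+2] = δ·[n+1] − [n]`. -/
noncomputable def qn : ℕ → Polynomial ℤ
  | 0 => 0
  | 1 => 1
  | n + 2 => X * qn (n + 1) - qn n

lemma qn_zero : qn 0 = 0 := rfl
lemma qn_one : qn 1 = 1 := rfl
lemma qn_add_two (n : ℕ) : qn (n + 2) = X * qn (n + 1) - qn n := rfl
lemma qn_two : qn 2 = X := by simp [qn_add_two, qn_one, qn_zero]

lemma qn_inv (n : ℕ) : qn (n+1)^2 - X * qn (n+1) * qn n + qn n ^ 2 = 1 := by
  induction n with
  | zero => simp [qn_zero, qn_one]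
  | succ n ih =>
    have h := qn_add_two n
    calc qn (n+2)^2 - X * qn (n+2) * qn (n+1) + qn (n+1)^2
        = qn (n+1)^2 - X * qn (n+1) * qn n + qn n ^ 2 := by rw [h]; ring
      _ = 1 := ih

lemma qn_cassini (n : ℕ) : qn (n + 2) * qn n = qn (n+1)^2 - 1 := by
  have h := qn_inv n
  rw [qn_add_two]
  linear_combination -h

lemma qn_addf (m : ℕ) : ∀ n : ℕ, qn (m + n + 1) = qn (m+1) * qn (n+1) - qn m * qn n := by
  intro n
  induction n using Nat.twoStepInduction with
  | zero => simp [qn_one, qn_zero]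
  | one =>
    show qn (m + 1 + 1) = _
    rw [show m + 1 + 1 = m + 2 by ring, qn_add_two m, qn_two, qn_one]; ring
  | more n ih1 ih2 =>
    have e1 : m + (n+2) + 1 = (m + n + 1) + 2 := by ring
    rw [e1, qn_add_two, show m + n + 1 + 1 = m + (n+1) + 1 by ring, ih2, ih1,
      qn_add_two (n+1), qn_add_two n]
    ring

/-- `D_{a+1} = [a+2] - [a]`. -/
noncomputable def Dq (a : ℕ) : Polynomial ℤ := qn (a + 2) - qn a

lemma Dq_eq (a : ℕ) : Dq a = X * qn (a+1) - 2 * qn a := by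
  rw [Dq, qn_add_two]; ring

lemma Dq_sq (a : ℕ) : (Dq a)^2 = (X^2 - 4) * (qn (a+1))^2 + 4 := by
  have h := qn_inv a
  rw [Dq_eq]
  linear_combination (4 : Polynomial ℤ) * h

/-- shift: [t + 2(a+1)] + [t] = D_{a+1} [t + a + 1]. -/
lemma qn_shift (a : ℕ) : ∀ t : ℕ, qn (t + 2*(a+1)) + qn t = Dq a * qn (t + a + 1) := by
  intro t
  induction t using Nat.twoStepInduction with
  | zero =>
    have h := qn_addf a (a+1)
    rw [Dq, qn_zero, add_zero, zero_add, show 2*(a+1) = a + (a+1) + 1 by ring, h,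
      show 0 + a + 1 = a + 1 by ring]
    ring
  | one =>
    have h := qn_addf (a+1) (a+1)
    have hc := qn_cassini a
    rw [Dq, qn_one, show 1 + 2*(a+1) = (a+1) + (a+1) + 1 by ring, h,
      show 1 + a + 1 = a + 2 by ring, show a + 1 + 1 = a + 2 from rfl]
    linear_combination hc
  | more t ih1 ih2 =>
    have e1 : t + 2 + 2*(a+1) = (t + 2*(a+1)) + 2 := by ring
    rw [e1, qn_add_two, qn_add_two t, show t + 2 + a + 1 = (t + a + 1) + 2 by ring,
      qn_add_two (t + a + 1), show t + 2*(a+1) + 1 = (t+1) + 2*(a+1) by ring,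
      show t + a + 1 + 1 = (t + 1) + a + 1 by ring]
    linear_combination X * ih2 - ih1

/-- multiplicativity: `[(a+1)·b] = [a+1] · ([b] ∘ D_{a+1})`. -/
lemma qn_mul (a : ℕ) : ∀ b : ℕ, qn ((a+1) * b) = qn (a+1) * (qn b).comp (Dq a) := by
  intro b
  induction b using Nat.twoStepInduction with
  | zero => simp [qn_zero]
  | one => simp [qn_one]
  | more b ih1 ih2 =>
    have e1 : (a+1) * (b+2) = (a+1)*b + 2*(a+1) := by ring
    have hs := qn_shift a ((a+1)*b)
    have e2 : (a+1)*b + a + 1 = (a+1)*(b+1) := by ring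
    rw [e2] at hs
    rw [e1, eq_sub_of_add_eq hs, ih1, ih2, qn_add_two b, sub_comp, mul_comp, X_comp]
    ring

lemma qn_monic (n : ℕ) : (qn (n+1)).Monic ∧ (qn (n+1)).natDegree = n := by
  induction n using Nat.twoStepInduction with
  | zero => simp [qn_one, monic_one]
  | one => rw [qn_two]; exact ⟨monic_X, natDegree_X⟩
  | more n ih1 ih2 =>
    obtain ⟨hm, hd⟩ := ih2
    have hXm : (X * qn (n+2)).Monic := monic_X.mul hm
    have hXd : (X * qn (n+2)).natDegree = n + 2 := by
      rw [natDegree_mul (X_ne_zero) hm.ne_zero, natDegree_X, hd]; ring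
    have hdeg : (qn (n+1)).degree < (X * qn (n+2)).degree := by
      apply Polynomial.degree_lt_degree
      rw [hXd, ih1.2]; omega
    constructor
    · rw [qn_add_two (n+1), sub_eq_add_neg]
      exact hXm.add_of_left (by rwa [degree_neg])
    · rw [qn_add_two (n+1), sub_eq_add_neg,
        natDegree_add_eq_left_of_degree_lt (by rwa [degree_neg]), hXd]

lemma qn_eval_two (n : ℕ) : (qn n).eval 2 = n := by
  induction n using Nat.twoStepInduction with
  | zero => simp [qn_zero]
  | one => simp [qn_one]
  | more n ih1 ih2 =>
    rw [qn_add_two, eval_sub, eval_mul, eval_X, ih1, ih2]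
    push_cast; ring

lemma qn_eval_neg_two (n : ℕ) : (qn n).eval (-2) = (-1)^(n+1) * n := by
  induction n using Nat.twoStepInduction with
  | zero => simp [qn_zero]
  | one => simp [qn_one]
  | more n ih1 ih2 =>
    rw [qn_add_two, eval_sub, eval_mul, eval_X, ih1, ih2]
    push_cast; ring

lemma qn_coeff_eq_zero (n : ℕ) : ∀ j : ℕ, (n + j) % 2 = 0 → (qn n).coeff j = 0 := by
  induction n using Nat.twoStepInduction with
  | zero => simp [qn_zero]
  | one =>
    intro j hj
    have hj1 : j ≠ 0 := by omega
    rw [qn_one, coeff_one]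
    simp [hj1]
  | more n ih1 ih2 =>
    intro j hj
    rw [qn_add_two, coeff_sub]
    rcases j with _ | j
    · rw [mul_comm, coeff_mul_X_zero, ih1 0 (by omega), sub_zero]
    · rw [coeff_X_mul, ih2 j (by omega), ih1 (j+1) (by omega), sub_zero]

section modp
variable (p : ℕ) [Fact p.Prime]

abbrev Smod (p : ℕ) := Polynomial (ZMod p)
noncomputable abbrev fA (p : ℕ) : Polynomial (Smod p) :=
  X ^ 2 - C Polynomial.X * X + 1
noncomputable abbrev Amod (p : ℕ) := AdjoinRoot (fA p)

lemma fA_natDegree : (fA p).natDegree = 2 := by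
  unfold fA; compute_degree!

lemma fA_monic : (fA p).Monic := by
  unfold fA; monicity!

noncomputable def ι : Smod p →+* Amod p := AdjoinRoot.of (fA p)

lemma ι_inj : Function.Injective (ι p) := by
  intro a b hab
  have h : AdjoinRoot.mk (fA p) (C a - C b) = 0 := by
    rw [map_sub]; rw [sub_eq_zero]; exact hab
  rw [AdjoinRoot.mk_eq_zero] at h
  by_contra hne
  have hC : C a - C b ≠ 0 := by
    simp only [ne_eq, ← C_sub, C_eq_zero, sub_eq_zero]; exact hne
  have := natDegree_le_of_dvd h hC
  rw [← C_sub] at this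
  rw [natDegree_C, fA_natDegree] at this
  omega
end modp

section modp2
variable (p : ℕ) [Fact p.Prime]

noncomputable def qA : Amod p := AdjoinRoot.root (fA p)
noncomputable def qA' : Amod p := ι p Polynomial.X - qA p

lemma qA_rel : (qA p)^2 - ι p Polynomial.X * qA p + 1 = 0 := by
  have h := AdjoinRoot.eval₂_root (fA p)
  simpa [fA, ι, qA] using h

lemma qA_mul_qA' : qA p * qA' p = 1 := by
  have h := qA_rel p
  rw [qA']; ring_nf; ring_nf at h; linear_combination -h

lemma qA_add_qA' : qA p + qA' p = ι p Polynomial.X := by rw [qA']; ring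

lemma cancel_gadget (r : Smod p) (h : (qA p - qA' p) * ι p r = 0) : r = 0 := by
  have h2 : (qA p - qA' p)^2 = ι p (Polynomial.X^2 - 4) := by
    have := qA_mul_qA' p
    have hadd := qA_add_qA' p
    rw [map_sub, map_pow, ← hadd, map_ofNat]
    ring_nf
    linear_combination (-4 : Amod p) * this
  have h3 : ι p ((Polynomial.X^2 - 4) * r) = 0 := by
    rw [map_mul, ← h2]
    calc (qA p - qA' p)^2 * ι p r = (qA p - qA' p) * ((qA p - qA' p) * ι p r) := by ring
      _ = 0 := by rw [h, mul_zero]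
  have h4 : (Polynomial.X^2 - 4 : Smod p) * r = 0 := by
    apply ι_inj p; rw [h3, map_zero]
  have h5 : (Polynomial.X^2 - 4 : Smod p) ≠ 0 := by
    intro hc
    have := congrArg (fun f => Polynomial.coeff f 2) hc
    simp at this
  exact (mul_eq_zero.mp h4).resolve_left h5

end modp2

section modp3
variable (p : ℕ) [Fact p.Prime]

noncomputable def mp (p : ℕ) (f : Polynomial ℤ) : Smod p := f.map (Int.castRingHom (ZMod p))

lemma charP_Amod : CharP (Amod p) p := by
  have hinj : Function.Injective ((ι p).comp (C : ZMod p →+* Smod p)) :=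
    (ι_inj p).comp C_injective
  exact charP_of_injective_ringHom hinj p

lemma lemA : ∀ n : ℕ, ι p (mp p (qn n)) * (qA p - qA' p) = (qA p)^n - (qA' p)^n := by
  intro n
  induction n using Nat.twoStepInduction with
  | zero => simp [qn_zero, mp]
  | one => simp [qn_one, mp]
  | more n ih1 ih2 =>
    have hrec : mp p (qn (n+2)) = Polynomial.X * mp p (qn (n+1)) - mp p (qn n) := by
      rw [mp, qn_add_two, Polynomial.map_sub, Polynomial.map_mul, map_X]; rfl
    rw [hrec, map_sub, map_mul, sub_mul, mul_assoc, ih1, ih2, ← qA_add_qA' p]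
    have hq := qA_mul_qA' p
    rw [pow_succ, pow_succ, pow_succ, pow_succ]
    linear_combination ((qA p)^n - (qA' p)^n) * hq

lemma lemD (a : ℕ) :
    ι p (mp p (qn (a+2) - qn a)) * (qA p - qA' p)
      = ((qA p)^(a+1) + (qA' p)^(a+1)) * (qA p - qA' p) := by
  have h1 := lemA p (a+2)
  have h2 := lemA p a
  have hsub : mp p (qn (a+2) - qn a) = mp p (qn (a+2)) - mp p (qn a) := by
    rw [mp, Polynomial.map_sub]; rfl
  rw [hsub, map_sub, sub_mul, h1, h2]
  have hq := qA_mul_qA' p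
  rw [show a + 2 = (a+1)+1 from rfl, pow_succ, pow_succ, pow_succ, pow_succ]
  linear_combination ((qA p)^a - (qA' p)^a) * hq
end modp3

section modp4
variable (p : ℕ) [Fact p.Prime]

/-- Frobenius: `[p] ≡ (X²-4)^((p-1)/2) mod p` for odd `p`. -/
lemma M1 (m' : ℕ) (hpm : p = 2*m' + 1) :
    mp p (qn p) = (Polynomial.X^2 - 4)^m' := by
  haveI := charP_Amod p
  have hsub : (qA p - qA' p)^p = (qA p)^p - (qA' p)^p := sub_pow_char _ _
  have hA := lemA p p
  have h2 : (qA p - qA' p)^2 = ι p (Polynomial.X^2 - 4) := by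
    have := qA_mul_qA' p
    rw [map_sub, map_pow, ← qA_add_qA' p, map_ofNat]
    ring_nf
    linear_combination (-4 : Amod p) * this
  have key : (qA p - qA' p) * ι p (mp p (qn p) - (Polynomial.X^2-4)^m') = 0 := by
    rw [map_sub, mul_sub, mul_comm, hA, map_pow, ← h2, ← pow_mul]
    rw [← hsub, hpm, pow_succ, pow_mul]
    ring
  have := cancel_gadget p _ key
  linear_combination this

/-- Frobenius: `D_p ≡ X^p mod p`. -/
lemma M2 (a : ℕ) (hpa : p = a + 1) :
    mp p (qn (a+2) - qn a) = Polynomial.X ^ p := by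
  haveI := charP_Amod p
  have hD := lemD p a
  have hadd : ((qA p) + (qA' p))^p = (qA p)^p + (qA' p)^p := add_pow_char _ _ _
  have key : (qA p - qA' p) * ι p (mp p (qn (a+2) - qn a) - Polynomial.X ^ p) = 0 := by
    rw [map_sub, mul_sub, mul_comm, hD, map_pow]
    have : ι p Polynomial.X ^ p = (qA p)^p + (qA' p)^p := by rw [← hadd, qA_add_qA' p]
    rw [this, ← hpa]
    ring
  have := cancel_gadget p _ key
  linear_combination this
end modp4

section c
variable (p : ℕ) [hp : Fact p.Prime]

lemma mp_mul (f g : Polynomial ℤ) : mp p (f * g) = mp p f * mp p g := Polynomial.map_mul _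
lemma mp_pow (f : Polynomial ℤ) (n : ℕ) : mp p (f ^ n) = mp p f ^ n := by simp [mp]
lemma mp_comp (f g : Polynomial ℤ) : mp p (f.comp g) = (mp p f).comp (mp p g) :=
  Polynomial.map_comp _ _ _

lemma C1 (a : ℕ) :
    (mp p (qn p)).comp (mp p (Dq a)) = mp p (qn p) * (mp p (qn (a+1)))^(p-1) := by
  have hDsq : (mp p (Dq a))^2 - 4 = (Polynomial.X^2 - 4) * (mp p (qn (a+1)))^2 := by
    have := congrArg (mp p) (Dq_sq a)
    rw [mp_pow] at this
    rw [this]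
    simp only [mp, Polynomial.map_add, Polynomial.map_mul, Polynomial.map_sub,
      Polynomial.map_pow, map_X, Polynomial.map_ofNat]
    ring
  rcases hp.out.eq_two_or_odd' with h2 | hodd
  · subst h2
    rw [show ((2:ℕ) - 1) = 1 from rfl, pow_one, show mp 2 (qn 2) = Polynomial.X by
      rw [qn_two, mp]; simp, X_comp]
    have : mp 2 (Dq a) = Polynomial.X * mp 2 (qn (a+1)) := by
      have := congrArg (mp 2) (Dq_eq a)
      rw [this]
      simp only [mp, Polynomial.map_sub, Polynomial.map_mul, map_X, Polynomial.map_ofNat]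
      have h20 : ((2:Polynomial (ZMod 2))) = 0 := by
        have h1 : ((2:Polynomial (ZMod 2))) = C (2 : ZMod 2) := by
          rw [map_ofNat]
        rw [h1, show ((2:ZMod 2)) = 0 from rfl, map_zero]
      rw [h20]
      ring
    rw [this]
  · obtain ⟨m', hm⟩ := hodd
    have hm' : p = 2*m' + 1 := by omega
    rw [M1 p m' hm', pow_comp, sub_comp, pow_comp, X_comp]
    have h4 : ((4 : Polynomial (ZMod p)).comp (mp p (Dq a))) = 4 := by
      norm_num
    rw [h4, hDsq, mul_pow, ← pow_mul, show 2*m' = p - 1 by omega]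
end c

section c2
variable (p : ℕ) [hp : Fact p.Prime]

lemma C2 (b : ℕ) : mp p (qn (p * b)) = mp p (qn p) * (mp p (qn b))^p := by
  obtain ⟨a, ha⟩ : ∃ a, p = a + 1 := ⟨p - 1, by have := hp.out.pos; omega⟩
  have hmul := qn_mul a b
  rw [← ha] at hmul
  rw [hmul, mp_mul, mp_comp]
  congr 1
  rw [show mp p (Dq a) = Polynomial.X ^ p from M2 p a ha, ← expand_eq_comp_X_pow]
  have := Polynomial.map_frobenius_expand p (mp p (qn b))
  rwa [ZMod.frobenius_zmod, Polynomial.map_id] at this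

lemma C3 (ℓ : ℕ) : ∀ j : ℕ,
    (mp p (qn (ℓ * p ^ j)))^(p-1) = (mp p (qn ℓ))^((p-1) * p^j) * (mp p (qn p))^(p^j - 1) := by
  intro j
  induction j with
  | zero => simp
  | succ j ih =>
    have e : p^(j+1) = p^j * p := pow_succ p j
    have hpj : 1 ≤ p^j := Nat.one_le_pow _ _ hp.out.pos
    have hp2 : 2 ≤ p := hp.out.two_le
    rw [show ℓ * p^(j+1) = p * (ℓ * p^j) by rw [e]; ring, C2 p (ℓ * p^j), mul_pow, ← pow_mul,
      mul_comm p (p-1), pow_mul, ih, mul_pow, ← pow_mul, ← pow_mul, mul_left_comm, ← pow_add]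
    congr 2
    · rw [e]; ring
    · rw [e, Nat.sub_mul, one_mul]
      have hc : p ≤ p^j * p := Nat.le_mul_of_pos_left p (by omega)
      omega

/-- the master mod-p congruence: `[p]∘D_m ≡ [p]^P [ℓ]^((p-1)P) mod p` for `m = ℓ p^(k-1)`. -/
lemma masterp (ℓ k : ℕ) (hℓ : 1 ≤ ℓ) (hk : 1 ≤ k) :
    mp p ((qn p).comp (Dq (ℓ * p^(k-1) - 1)) -
      (qn p)^(p^(k-1)) * (qn ℓ)^((p-1) * p^(k-1))) = 0 := by
  set m := ℓ * p^(k-1) with hm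
  have hm1 : 1 ≤ m := Nat.mul_pos (by omega) (Nat.one_le_pow _ _ hp.out.pos)
  have hmm : m - 1 + 1 = m := by omega
  have hsub : mp p ((qn p).comp (Dq (m - 1)) - (qn p)^(p^(k-1)) * (qn ℓ)^((p-1) * p^(k-1)))
      = mp p ((qn p).comp (Dq (m - 1))) -
      mp p ((qn p)^(p^(k-1)) * (qn ℓ)^((p-1) * p^(k-1))) := by simp [mp]
  rw [hsub, mp_comp, C1 p (m-1), hmm, sub_eq_zero, mp_mul, mp_pow, mp_pow, C3 p ℓ (k-1)]
  have hP : 1 ≤ p^(k-1) := Nat.one_le_pow _ _ hp.out.pos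
  rw [mul_left_comm, ← pow_succ', show p^(k-1) - 1 + 1 = p^(k-1) by omega, mul_comm]
end c2

section dvd
variable (p : ℕ) [hp : Fact p.Prime]

lemma dvd_iff_mp_zero (f : Polynomial ℤ) : (p : Polynomial ℤ) ∣ f ↔ mp p f = 0 := by
  have hCp : ((p : Polynomial ℤ)) = C (p : ℤ) := by
    rw [← Polynomial.C_eq_natCast]
  rw [hCp, C_dvd_iff_dvd_coeff]
  constructor
  · intro h
    ext n
    simp only [mp, coeff_map, coeff_zero, Int.coe_castRingHom]
    exact_mod_cast (ZMod.intCast_zmod_eq_zero_iff_dvd _ _).mpr (h n)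
  · intro h n
    have := congrArg (fun g => Polynomial.coeff g n) h
    simp only [mp, coeff_map, coeff_zero, Int.coe_castRingHom] at this
    exact_mod_cast (ZMod.intCast_zmod_eq_zero_iff_dvd _ _).mp this
end dvd

section hg
variable (p : ℕ) [hp : Fact p.Prime]

/-- `[p]` as a polynomial in `X²` (p odd): the raw even-part. -/
noncomputable def h0 (m' : ℕ) : Polynomial ℤ :=
  ∑ i ∈ Finset.range (m' + 1), Polynomial.monomial i ((qn p).coeff (2*i))

lemma h0_coeff (m' i : ℕ) : (h0 p m').coeff i =
    if i ≤ m' then (qn p).coeff (2*i) else 0 := by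
  rw [h0, finset_sum_coeff]
  by_cases hi : i ≤ m'
  · rw [if_pos hi, Finset.sum_eq_single i (fun b _ hb => coeff_monomial_of_ne _ (Ne.symm hb)) (by
      intro h; exact absurd (Finset.mem_range.mpr (by omega)) h), coeff_monomial, if_pos rfl]
  · rw [if_neg hi]
    apply Finset.sum_eq_zero
    intro b hb
    rw [coeff_monomial, if_neg (by rw [Finset.mem_range] at hb; omega)]

lemma expand_h0 (m' : ℕ) (hpm : p = 2*m' + 1) : expand ℤ 2 (h0 p m') = qn p := by
  ext j
  rw [coeff_expand (by norm_num)]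
  by_cases h2 : 2 ∣ j
  · rw [if_pos h2, h0_coeff]
    obtain ⟨i, rfl⟩ := h2
    rw [Nat.mul_div_cancel_left i (by norm_num)]
    by_cases hi : i ≤ m'
    · rw [if_pos hi]
    · rw [if_neg hi]
      symm
      apply coeff_eq_zero_of_natDegree_lt
      have := (qn_monic (p-1)).2
      rw [show p - 1 + 1 = p by omega] at this
      rw [this]; omega
  · rw [if_neg h2]
    symm
    apply qn_coeff_eq_zero
    omega

lemma h0_natDegree (m' : ℕ) (hpm : p = 2*m' + 1) :
    (h0 p m').natDegree = m' ∧ (h0 p m').coeff m' = 1 := by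
  have hlead : (h0 p m').coeff m' = 1 := by
    rw [h0_coeff, if_pos le_rfl]
    have h := (qn_monic (p-1))
    rw [show p - 1 + 1 = p by omega] at h
    have := h.1
    rw [Monic, leadingCoeff, h.2] at this
    rw [show 2*m' = p - 1 by omega]
    exact this
  constructor
  · apply le_antisymm
    · apply natDegree_le_iff_coeff_eq_zero.mpr
      intro N hN
      rw [h0_coeff, if_neg (by omega)]
    · exact le_natDegree_of_ne_zero (by rw [hlead]; norm_num)
  · exact hlead

/-- the shifted polynomial `h` with `qn p = h ∘ (X² - 4)`, `h` monic of degree `m'`. -/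
noncomputable def hh (m' : ℕ) : Polynomial ℤ := (h0 p m').comp (Polynomial.X + C 4)

lemma hh_comp (m' : ℕ) (hpm : p = 2*m' + 1) :
    (hh p m').comp (Polynomial.X^2 - C 4) = qn p := by
  rw [hh, comp_assoc, add_comp, X_comp, C_comp, sub_add_cancel, ← expand_eq_comp_X_pow]
  exact expand_h0 p m' hpm

lemma hh_monic (m' : ℕ) (hpm : p = 2*m' + 1) : (hh p m').Monic ∧ (hh p m').natDegree = m' := by
  obtain ⟨hdeg, hlead⟩ := h0_natDegree p m' hpm
  have hm : (h0 p m').Monic := by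
    rw [Monic, leadingCoeff, hdeg, hlead]
  constructor
  · exact hm.comp_X_add_C _
  · rw [hh, natDegree_comp, natDegree_X_add_C, hdeg, mul_one]
end hg

section gg
variable (p : ℕ) [hp : Fact p.Prime]

lemma comp_cancel {K : Type*} [Field K] (f1 f2 : Polynomial K)
    (hcomp : f1.comp (Polynomial.X^2 - 4) = f2.comp (Polynomial.X^2 - 4)) : f1 = f2 := by
  by_contra hne
  have hsub : (f1 - f2).comp (Polynomial.X^2 - 4) = 0 := by
    rw [sub_comp, hcomp, sub_self]
  have hne0 : f1 - f2 ≠ 0 := sub_ne_zero.mpr hne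
  have hXdeg : (Polynomial.X^2 - 4 : Polynomial K).natDegree = 2 := by
    compute_degree!
  have := leadingCoeff_comp (p := f1 - f2) (q := Polynomial.X^2 - 4) (by rw [hXdeg]; omega)
  rw [hsub, leadingCoeff_zero] at this
  have hl1 : (f1 - f2).leadingCoeff ≠ 0 := leadingCoeff_ne_zero.mpr hne0
  have hl2 : (Polynomial.X^2 - 4 : Polynomial K).leadingCoeff ≠ 0 := by
    apply leadingCoeff_ne_zero.mpr
    intro hc
    rw [hc] at hXdeg
    simp at hXdeg
  exact (mul_ne_zero hl1 (pow_ne_zero _ hl2)) this.symm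

lemma mp_hh (m' : ℕ) (hpm : p = 2*m' + 1) : mp p (hh p m') = Polynomial.X ^ m' := by
  have h1 : mp p ((hh p m').comp (Polynomial.X^2 - C 4)) = mp p (qn p) := by
    rw [hh_comp p m' hpm]
  have h2 : mp p (Polynomial.X^2 - C 4) = Polynomial.X^2 - 4 := by
    simp [mp]
  rw [show mp p ((hh p m').comp (Polynomial.X^2 - C 4))
      = (mp p (hh p m')).comp (mp p (Polynomial.X^2 - C 4)) from Polynomial.map_comp _ _ _,
    h2, M1 p m' hpm] at h1
  apply comp_cancel
  rw [h1, pow_comp, X_comp]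

lemma g_exists (m' : ℕ) (hpm : p = 2*m' + 1) :
    ∃ g : Polynomial ℤ, hh p m' = Polynomial.X^m' + (p : Polynomial ℤ) * g ∧
      g.eval 0 = 1 ∧ g.natDegree ≤ m' - 1 := by
  have hdvd : (p : Polynomial ℤ) ∣ (hh p m' - Polynomial.X^m') := by
    rw [dvd_iff_mp_zero]
    have : mp p (hh p m' - Polynomial.X^m') = mp p (hh p m') - Polynomial.X^m' := by
      simp [mp]
    rw [this, mp_hh p m' hpm, sub_self]
  obtain ⟨g, hg⟩ := hdvd
  have hm'1 : 1 ≤ m' := by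
    have := hp.out.two_le; omega
  obtain ⟨hmon, hdeg⟩ := hh_monic p m' hpm
  have hhg : hh p m' = Polynomial.X^m' + (p : Polynomial ℤ) * g := by
    rw [← hg]; ring
  refine ⟨g, hhg, ?_, ?_⟩
  · -- eval at 0
    have he : (hh p m').eval 0 = (p : ℤ) := by
      have := congrArg (Polynomial.eval (2 : ℤ)) (hh_comp p m' hpm)
      rw [eval_comp] at this
      simp only [eval_sub, eval_pow, eval_X, eval_C] at this
      norm_num at this
      rw [this, qn_eval_two]
    have := congrArg (Polynomial.eval (0 : ℤ)) hhg
    rw [he] at this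
    simp only [eval_add, eval_pow, eval_X, eval_mul, eval_natCast] at this
    rw [zero_pow (by omega)] at this
    have hp0 : (p : ℤ) ≠ 0 := by exact_mod_cast hp.out.ne_zero
    replace this := mul_left_cancel₀ hp0 (show (p:ℤ) * eval 0 g = (p:ℤ) * 1 by linarith)
    linarith [this]
  · -- degree bound
    have hd2 : (hh p m' - Polynomial.X^m').natDegree ≤ m' - 1 := by
      apply natDegree_le_iff_coeff_eq_zero.mpr
      intro N hN
      rw [coeff_sub, coeff_X_pow]
      rcases eq_or_lt_of_le (show m' ≤ N by omega) with hEq | hlt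
      · rw [← hEq, if_pos rfl]
        have : (hh p m').coeff m' = 1 := by
          have := hmon
          rw [Monic, leadingCoeff, hdeg] at this
          exact this
        rw [this]; ring
      · rw [if_neg (by omega), coeff_eq_zero_of_natDegree_lt (by omega), sub_zero]
    rw [hg] at hd2
    have hCp : ((p:ℤ[X])) = C (p:ℤ) := by rw [← Polynomial.C_eq_natCast]
    rw [hCp, natDegree_C_mul (by exact_mod_cast hp.out.ne_zero : (p:ℤ) ≠ 0)] at hd2
    exact hd2
end gg

section podd
variable (p : ℕ) [hp : Fact p.Prime]

lemma podd_key (m' b : ℕ) (hpm : p = 2*m' + 1) (hb : 1 ≤ b) :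
    ∃ F1 : Polynomial ℤ,
      (qn p).comp (Dq b) - qn p * (qn (b+1))^(p-1) = (p : Polynomial ℤ) * F1 ∧
      ¬ (p : Polynomial ℤ) ∣ F1 := by
  obtain ⟨g, hg, hg0, hgdeg⟩ := g_exists p m' hpm
  set w : Polynomial ℤ := (Dq b)^2 - C 4 with hw
  have hwval : w = (Polynomial.X^2 - C 4) * (qn (b+1))^2 := by
    rw [hw, Dq_sq]
    have : (C 4 : Polynomial ℤ) = 4 := by norm_num
    rw [this]; ring
  have hGH : (qn p).comp (Dq b) - qn p * (qn (b+1))^(p-1)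
      = (p : Polynomial ℤ) * (g.comp w - (g.comp (Polynomial.X^2 - C 4)) * (qn (b+1))^(p-1)) := by
    have hG : (qn p).comp (Dq b) = (hh p m').comp w := by
      rw [← hh_comp p m' hpm, comp_assoc]
      congr 1
      rw [sub_comp, pow_comp, X_comp, C_comp]
    have hqnp : qn p = (Polynomial.X^2 - C 4)^m' + (p : Polynomial ℤ) * g.comp (Polynomial.X^2 - C 4) := by
      rw [← hh_comp p m' hpm, hg, add_comp, pow_comp, X_comp, mul_comp, natCast_comp]
    rw [hG, hg, add_comp, pow_comp, X_comp, mul_comp, natCast_comp, hqnp, hwval, mul_pow,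
      ← pow_mul, show 2*m' = p - 1 by omega]
    ring
  refine ⟨_, hGH, ?_⟩
  rw [dvd_iff_mp_zero]
  intro hF0
  have hmp : mp p (g.comp w - (g.comp (Polynomial.X^2 - C 4)) * (qn (b+1))^(p-1))
      = (mp p g).comp (mp p w) - ((mp p g).comp (Polynomial.X^2 - 4)) * (mp p (qn (b+1)))^(p-1) := by
    simp only [mp, Polynomial.map_sub, Polynomial.map_mul, Polynomial.map_pow,
      Polynomial.map_comp, Polynomial.map_ofNat, map_X, Polynomial.map_C]
    rw [show ((Int.castRingHom (ZMod p)) (4:ℤ)) = (4 : ZMod p) from map_ofNat _ 4,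
      show (Polynomial.C (4 : ZMod p)) = (4 : Polynomial (ZMod p)) from map_ofNat _ 4]
  rw [hmp, sub_eq_zero] at hF0
  set gb := mp p g with hgb
  set qb := mp p (qn (b+1)) with hqb
  have hqb_monic : qb.Monic := (qn_monic b).1.map _
  have hqb_deg : qb.natDegree = b := by
    simp only [hqb, mp]
    rw [(qn_monic b).1.natDegree_map, (qn_monic b).2]
  have hgb0 : gb.eval 0 = 1 := by
    rw [hgb, mp, eval_map, eval₂_at_zero]
    rw [show (Int.castRingHom (ZMod p)) (g.coeff 0) = ((g.coeff 0 : ℤ) : ZMod p) from rfl]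
    rw [← coeff_zero_eq_eval_zero] at hg0
    rw [hg0]; norm_num
  have hgbne : gb ≠ 0 := fun hc => by rw [hc] at hgb0; simp at hgb0
  have hgbdeg : gb.natDegree ≤ m' - 1 := le_trans (natDegree_map_le) hgdeg
  have hwmap : mp p w = (Polynomial.X^2 - 4) * qb^2 := by
    rw [hwval]
    simp only [mp, Polynomial.map_mul, Polynomial.map_pow, Polynomial.map_sub, map_X,
      Polynomial.map_C]
    rw [show ((Int.castRingHom (ZMod p)) (4:ℤ)) = (4 : ZMod p) from map_ofNat _ 4,
      show (Polynomial.C (4 : ZMod p)) = (4 : Polynomial (ZMod p)) from map_ofNat _ 4]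
    rfl
  have hX24 : (Polynomial.X^2 - 4 : Polynomial (ZMod p)).natDegree = 2 := by compute_degree!
  have hX24m : (Polynomial.X^2 - 4 : Polynomial (ZMod p)).Monic := by monicity!
  have hm'1 : 1 ≤ m' := by have := hp.out.two_le; omega
  rcases Nat.eq_zero_or_pos gb.natDegree with hdg | hdg
  · -- gb is the constant 1
    have hgb1 : gb = 1 := by
      have hgbC : gb = C (gb.coeff 0) := eq_C_of_natDegree_eq_zero hdg
      have hc0 : gb.coeff 0 = 1 := by rw [coeff_zero_eq_eval_zero, hgb0]
      rw [hgbC, hc0, map_one]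
    rw [hgb1, one_comp, one_comp, one_mul] at hF0
    have := congrArg natDegree hF0
    rw [natDegree_one, natDegree_pow, hqb_deg] at this
    have hp2 := hp.out.two_le
    have : (p-1) * b ≥ 1 := by
      apply Nat.one_le_iff_ne_zero.mpr
      intro hc
      rcases Nat.mul_eq_zero.mp hc with h | h <;> omega
    omega
  · have hF := congrArg natDegree hF0
    have hwm : (mp p w).Monic := by rw [hwmap]; exact hX24m.mul (hqb_monic.pow 2)
    have hwdeg : (mp p w).natDegree = 2 + 2*b := by
      rw [hwmap, natDegree_mul hX24m.ne_zero (pow_ne_zero _ hqb_monic.ne_zero), hX24,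
        natDegree_pow, hqb_deg]
    have hcompne : gb.comp (Polynomial.X^2 - 4) ≠ 0 := by
      intro hc
      have hlc := leadingCoeff_comp (p := gb) (q := Polynomial.X^2 - 4) (by rw [hX24]; omega)
      rw [hc, leadingCoeff_zero] at hlc
      exact (mul_ne_zero (leadingCoeff_ne_zero.mpr hgbne)
        (pow_ne_zero _ (leadingCoeff_ne_zero.mpr hX24m.ne_zero))) hlc.symm
    rw [natDegree_comp, natDegree_mul hcompne (pow_ne_zero _ hqb_monic.ne_zero),
      natDegree_comp, hX24, hwdeg, natDegree_pow, hqb_deg] at hF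
    -- hF : gb.natDegree * (2 + 2*b) = gb.natDegree * 2 + (p-1)*b
    have h2dg : 2 * gb.natDegree = p - 1 := by
      have hp2 := hp.out.two_le
      nlinarith [hF]
    omega
end podd

lemma comp_sub_eval_dvd (f g : Polynomial ℤ) (a : ℤ) :
    (g - C a) ∣ (f.comp g - C (f.eval a)) := by
  have h := sub_dvd_eval_sub g (C a) (f.map (C : ℤ →+* Polynomial ℤ))
  rwa [eval_map, ← comp, eval_map, ← comp, comp_C] at h

/-- For a prime `p`, `ℓ ≥ 2`, `k ≥ 1`, and an irreducible `m_δ ∈ ℤ[X]` dividing `[ℓ]` but no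
`[n]` for `1 ≤ n < ℓ`, there is `F ∈ ℤ[X]` with
`[ℓ·p^k] = [ℓ·p^(k−1)] · ([p]^(p^(k−1)) · [ℓ]^((p−1)·p^(k−1)) + p·F)` and `F` divisible
neither by `p` nor by `m_δ`. -/
theorem qn_mul_prime_pow_decomposition (p : ℕ) (hp : p.Prime) (ℓ k : ℕ)
    (hℓ : 2 ≤ ℓ) (hk : 1 ≤ k)
    (mδ : Polynomial ℤ) (hirr : Irreducible mδ) (hdvd : mδ ∣ qn ℓ)
    (hnotdvd : ∀ n : ℕ, 1 ≤ n → n < ℓ → ¬ mδ ∣ qn n) :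
    ∃ F : Polynomial ℤ,
      qn (ℓ * p ^ k) =
        qn (ℓ * p ^ (k - 1)) *
          ((qn p) ^ (p ^ (k - 1)) * (qn ℓ) ^ ((p - 1) * p ^ (k - 1)) + (p : Polynomial ℤ) * F) ∧
      ¬ (p : Polynomial ℤ) ∣ F ∧ ¬ mδ ∣ F := by
  haveI : Fact p.Prime := ⟨hp⟩
  have hp2 : 2 ≤ p := hp.two_le
  set P := p ^ (k-1) with hP
  have hP1 : 1 ≤ P := Nat.one_le_pow _ _ hp.pos
  set m := ℓ * P with hm
  have hm1 : 1 ≤ m := by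
    have : 1 * 1 ≤ ℓ * P := Nat.mul_le_mul (by omega) hP1
    omega
  set G := (qn p).comp (Dq (m - 1)) with hG
  set H := (qn p)^P * (qn ℓ)^((p-1) * P) with hH
  -- existence of F
  have hdvdGH : (p : Polynomial ℤ) ∣ G - H := by
    rw [dvd_iff_mp_zero]
    exact masterp p ℓ k (by omega) hk
  obtain ⟨F, hF⟩ := hdvdGH
  have hpne : (p : Polynomial ℤ) ≠ 0 := by
    exact_mod_cast Nat.cast_ne_zero.mpr hp.ne_zero
  -- the splitting identity
  have hsplit : qn (ℓ * p ^ k) = qn m * G := by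
    have h1 : ℓ * p ^ k = m * p := by
      rw [hm, hP, mul_assoc, ← pow_succ]
      congr 2
      omega
    have h2 := qn_mul (m-1) p
    rw [show m - 1 + 1 = m by omega] at h2
    rw [h1, h2, hG]
  refine ⟨F, ?_, ?_, ?_⟩
  · rw [hsplit, ← hF]; ring
  · -- ¬ p ∣ F
    rcases Nat.lt_or_ge k 2 with hk1 | hk2
    · -- k = 1
      have hk1' : k = 1 := by omega
      have hPeq : P = 1 := by rw [hP, hk1']; norm_num
      have hmeq : m = ℓ := by rw [hm, hPeq, mul_one]
      rcases hp.eq_two_or_odd' with hp2' | hodd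
      · -- p = 2 : F = - qn (ℓ - 1)
        have hFval : F = - qn (ℓ - 1) := by
          apply mul_left_cancel₀ hpne
          rw [← hF, hG, hH, hPeq, hmeq, hp2', pow_one]
          rw [show (2:ℕ) - 1 = 1 from rfl, one_mul, pow_one, qn_two, X_comp,
            Dq_eq (ℓ - 1), show ℓ - 1 + 1 = ℓ by omega]
          push_cast
          ring
        rw [hFval, dvd_neg, hp2']
        rw [dvd_iff_mp_zero]
        intro hc
        have hmonic : (mp 2 (qn (ℓ - 1))).Monic := by
          have h := (qn_monic (ℓ - 2)).1
          rw [show ℓ - 2 + 1 = ℓ - 1 by omega] at h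
          exact h.map _
        exact hmonic.ne_zero hc
      · -- p odd
        obtain ⟨m', hm'⟩ := hodd
        obtain ⟨F1, hF1, hF1nd⟩ := podd_key p m' (ℓ - 1) (by omega) (by omega)
        have hFval : F = F1 := by
          apply mul_left_cancel₀ hpne
          rw [← hF, ← hF1, hG, hH, hPeq, hmeq, pow_one, mul_one,
            show ℓ - 1 + 1 = ℓ by omega]
        rwa [hFval]
    · -- k ≥ 2
      intro hcon
      have he : (p:ℤ) * F.eval 2 = (p:ℤ) - (p:ℤ)^P * (ℓ:ℤ)^((p-1)*P) := by
        have := congrArg (Polynomial.eval (2:ℤ)) hF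
        rw [eval_mul, eval_natCast, eval_sub] at this
        rw [← this, hG, hH]
        congr 1
        · rw [eval_comp]
          have hD2 : (Dq (m-1)).eval 2 = 2 := by
            rw [Dq, eval_sub, qn_eval_two, qn_eval_two]
            have : m - 1 + 2 = m + 1 := by omega
            rw [this]
            push_cast [Nat.cast_sub hm1]
            ring
          rw [hD2, qn_eval_two]
        · rw [eval_mul, eval_pow, eval_pow, qn_eval_two, qn_eval_two]
      have hP2 : 2 ≤ P := by
        rw [hP]
        calc 2 ≤ p := hp2
        _ = p^1 := (pow_one p).symm
        _ ≤ p^(k-1) := Nat.pow_le_pow_right hp.pos (by omega)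
      have hFe : F.eval 2 = 1 - (p:ℤ)^(P-1) * (ℓ:ℤ)^((p-1)*P) := by
        apply mul_left_cancel₀ (show ((p:ℤ)) ≠ 0 by exact_mod_cast hp.ne_zero)
        have hps : ((p:ℤ))^P = (p:ℤ) * (p:ℤ)^(P-1) := by
          rw [← pow_succ']
          congr 1
          omega
        rw [he, hps]
        ring
      have hdvdF2 : (p:ℤ) ∣ F.eval 2 := by
        obtain ⟨F2, rfl⟩ := hcon
        rw [eval_mul, eval_natCast]
        exact Dvd.intro _ rfl
      have hdvd1 : (p:ℤ) ∣ 1 := by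
        have h2 : (p:ℤ) ∣ (p:ℤ)^(P-1) * (ℓ:ℤ)^((p-1)*P) := by
          apply dvd_mul_of_dvd_left
          exact dvd_pow_self _ (by omega)
        have := dvd_add hdvdF2 h2
        rwa [hFe, sub_add_cancel] at this
      have := Int.le_of_dvd one_pos hdvd1
      omega
  · -- ¬ mδ ∣ F
    intro hcon
    have hprime : Prime mδ := (UniqueFactorizationMonoid.irreducible_iff_prime).mp hirr
    have hdvdm : mδ ∣ qn m := by
      have h := qn_mul (ℓ - 1) P
      rw [show ℓ - 1 + 1 = ℓ by omega] at h
      rw [hm, h]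
      exact Dvd.dvd.mul_right hdvd _
    have hdvdH : mδ ∣ H := by
      rw [hH]
      apply Dvd.dvd.mul_left
      calc mδ ∣ qn ℓ := hdvd
        _ ∣ (qn ℓ)^((p-1)*P) := dvd_pow_self _ (Nat.mul_ne_zero (by omega) (by omega))
    have hDpm : mδ ∣ (Dq (m-1) - C 2) * (Dq (m-1) + C 2) := by
      have hid : (Dq (m-1) - C 2) * (Dq (m-1) + C 2) = (X^2 - 4) * (qn m)^2 := by
        have h := Dq_sq (m-1)
        rw [show m - 1 + 1 = m by omega] at h
        have hC2 : (C (2:ℤ) : Polynomial ℤ) = 2 := by norm_num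
        rw [hC2]
        linear_combination h
      rw [hid]
      exact Dvd.dvd.mul_left (dvd_pow hdvdm (by norm_num)) _
    have hcases := (hprime.dvd_mul.mp hDpm)
    -- in both cases, mδ ∣ C v for v = ± p
    have hkey : ∃ v : ℤ, v ≠ 0 ∧ mδ ∣ C v := by
      rcases hcases with hc | hc
      · refine ⟨(qn p).eval 2, by rw [qn_eval_two]; exact_mod_cast hp.ne_zero, ?_⟩
        have h1 : mδ ∣ G - C ((qn p).eval 2) :=
          dvd_trans hc (comp_sub_eval_dvd (qn p) (Dq (m-1)) 2)
        have h2 : mδ ∣ (p : Polynomial ℤ) * F - C ((qn p).eval 2) := by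
          have : (p : Polynomial ℤ) * F - C ((qn p).eval 2)
              = (G - C ((qn p).eval 2)) - H := by rw [← hF]; ring
          rw [this]
          exact dvd_sub h1 hdvdH
        have h3 : mδ ∣ (p : Polynomial ℤ) * F := Dvd.dvd.mul_left hcon _
        have := dvd_sub h3 h2
        rwa [sub_sub_cancel] at this
      · refine ⟨(qn p).eval (-2), ?_, ?_⟩
        · rw [qn_eval_neg_two]
          have : ((p:ℤ)) ≠ 0 := by exact_mod_cast hp.ne_zero
          intro hc0
          rcases mul_eq_zero.mp hc0 with h | h
          · exact (pow_ne_zero _ (by norm_num : (-1:ℤ) ≠ 0)) h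
          · exact this h
        · have hc' : mδ ∣ Dq (m-1) - C (-2) := by
            rw [map_neg]
            have : Dq (m-1) - -C 2 = Dq (m-1) + C 2 := by ring
            rw [this]
            exact hc
          have h1 : mδ ∣ G - C ((qn p).eval (-2)) :=
            dvd_trans hc' (comp_sub_eval_dvd (qn p) (Dq (m-1)) (-2))
          have h2 : mδ ∣ (p : Polynomial ℤ) * F - C ((qn p).eval (-2)) := by
            have : (p : Polynomial ℤ) * F - C ((qn p).eval (-2))
                = (G - C ((qn p).eval (-2))) - H := by rw [← hF]; ring
            rw [this]
            exact dvd_sub h1 hdvdH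
          have h3 : mδ ∣ (p : Polynomial ℤ) * F := Dvd.dvd.mul_left hcon _
          have := dvd_sub h3 h2
          rwa [sub_sub_cancel] at this
    obtain ⟨v, hv0, hvd⟩ := hkey
    have hdeg0 : mδ.natDegree = 0 := by
      have := natDegree_le_of_dvd hvd (by simp [hv0])
      rwa [natDegree_C, Nat.le_zero] at this
    have hunit : IsUnit mδ := by
      have hCc : mδ = C (mδ.coeff 0) := eq_C_of_natDegree_eq_zero hdeg0
      rw [hCc] at hdvd
      have hcoef := (C_dvd_iff_dvd_coeff _ _).mp hdvd (ℓ - 1)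
      have hlead : (qn ℓ).coeff (ℓ - 1) = 1 := by
        have h := qn_monic (ℓ - 1)
        rw [show ℓ - 1 + 1 = ℓ by omega] at h
        have := h.1
        rw [Monic, leadingCoeff, h.2] at this
        exact this
      rw [hlead] at hcoef
      rw [hCc]
      exact (isUnit_C).mpr (isUnit_of_dvd_one hcoef)
    exact hirr.not_isUnit hunit
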